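/- arXiv:0710.0492 — 3 statements merged into one kernel-verified Lean document; each statement's English description precedes it below -/
import Mathlib

section
/- Let (X, μ) be a finite measure space, n ≥ 5 an integer and N = 2n/(n−4). Let u : X → ℝ be a nonnegative function with u ∈ L^N(μ), and let (v_m) be a sequence in L^N(μ) with sup_m ‖v_m‖_{L^N} < ∞ which converges strongly in L²(μ) to a function v ∈ L^N(μ). Then ∫_X u^{N−2}·|v_m² − v²| dμ → 0 as m → ∞. -/
open MeasureTheory Filter Topology
open scoped ENNReal

/-- Main analytic content: the statement with the clean hypothesis `2 < N`. -/
theorem aux_int_weight {X : Type*} [MeasurableSpace X] (μ : Measure X) [IsFiniteMeasure μ]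
    (N : ℝ) (hN2 : 2 < N)
    (u : X → ℝ) (hu0 : ∀ x, 0 ≤ u x) (huN : MemLp u (ENNReal.ofReal N) μ)
    (v : X → ℝ) (hv : MemLp v (ENNReal.ofReal N) μ)
    (vm : ℕ → X → ℝ) (hvm : ∀ m, MemLp (vm m) (ENNReal.ofReal N) μ)
    (hbound : ∃ C : ℝ≥0∞, C < ⊤ ∧ ∀ m, eLpNorm (vm m) (ENNReal.ofReal N) μ ≤ C)
    (hL2 : Tendsto (fun m => eLpNorm (fun x => vm m x - v x) 2 μ) atTop (𝓝 0)) :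
    Tendsto (fun m => ∫ x, u x ^ (N - 2) * |(vm m x) ^ 2 - (v x) ^ 2| ∂μ)
      atTop (𝓝 0) := by
  obtain ⟨C, hC, hCb⟩ := hbound
  have hNpos : (0 : ℝ) < N := by linarith
  have hN2pos : (0 : ℝ) < N - 2 := by linarith
  -- exponents
  set pN : ℝ≥0∞ := ENNReal.ofReal N with hpN
  set pq : ℝ≥0∞ := ENNReal.ofReal (N / (N - 2)) with hpq
  set ph : ℝ≥0∞ := ENNReal.ofReal (N / 2) with hph
  have hqpos : (0 : ℝ) < N / (N - 2) := by positivity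
  have hhpos : (0 : ℝ) < N / 2 := by positivity
  have hq1 : (1 : ℝ≥0∞) ≤ pq := by
    rw [hpq, ← ENNReal.ofReal_one]
    exact ENNReal.ofReal_le_ofReal ((one_le_div hN2pos).2 (by linarith))
  have hh1 : (1 : ℝ≥0∞) ≤ ph := by
    rw [hph, ← ENNReal.ofReal_one]
    exact ENNReal.ofReal_le_ofReal ((one_le_div (by norm_num)).2 (by linarith))
  -- conjugacy: 1/1 = 1/pq + 1/ph
  have E1 : (1 : ℝ≥0∞) / 1 = 1 / pq + 1 / ph := by
    rw [hpq, hph, one_div, one_div, one_div, inv_one,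
      ← ENNReal.ofReal_inv_of_pos hqpos, ← ENNReal.ofReal_inv_of_pos hhpos,
      ← ENNReal.ofReal_add (by positivity) (by positivity), ← ENNReal.ofReal_one]
    congr 1
    field_simp
    ring
  -- the weight g = u ^ (N-2) is in L^{pq}
  have hgmem : MemLp (fun x => u x ^ (N - 2)) pq μ := by
    have h1 := huN.norm_rpow_div (ENNReal.ofReal (N - 2))
    rw [ENNReal.toReal_ofReal hN2pos.le] at h1
    have h2 : (fun x => ‖u x‖ ^ (N - 2)) = fun x => u x ^ (N - 2) := by
      funext x; rw [Real.norm_eq_abs, abs_of_nonneg (hu0 x)]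
    rw [h2] at h1
    have h3 : pN / ENNReal.ofReal (N - 2) = pq := by
      rw [hpq, hpN, ENNReal.ofReal_div_of_pos hN2pos]
    rwa [h3] at h1
  -- squares are in L^{ph}
  have hsqnorm : ∀ w : X → ℝ,
      eLpNorm (fun x => (w x) ^ 2) ph μ = (eLpNorm w pN μ) ^ (2 : ℝ) := by
    intro w
    have h1 : (fun x => (w x) ^ 2) = fun x => ‖w x‖ ^ (2 : ℝ) := by
      funext x
      rw [show (2 : ℝ) = ((2 : ℕ) : ℝ) by norm_num, Real.rpow_natCast,
        Real.norm_eq_abs, sq_abs]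
    rw [h1, eLpNorm_norm_rpow w (by norm_num : (0 : ℝ) < 2)]
    congr 1
    rw [hph, hpN, ← ENNReal.ofReal_mul hhpos.le, div_mul_cancel₀ _ (by norm_num : (2:ℝ) ≠ 0)]
  have hsqmem : ∀ w : X → ℝ, MemLp w pN μ → MemLp (fun x => (w x) ^ 2) ph μ := by
    intro w hw
    have h1 := hw.norm_rpow_div (ENNReal.ofReal 2)
    rw [ENNReal.toReal_ofReal (by norm_num : (0:ℝ) ≤ 2)] at h1
    have h2 : (fun x => ‖w x‖ ^ (2 : ℝ)) = fun x => (w x) ^ 2 := by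
      funext x
      rw [show (2 : ℝ) = ((2 : ℕ) : ℝ) by norm_num, Real.rpow_natCast,
        Real.norm_eq_abs, sq_abs]
    rw [h2] at h1
    have h3 : pN / ENNReal.ofReal 2 = ph := by
      rw [hph, hpN, ENNReal.ofReal_div_of_pos (by norm_num)]
    rwa [h3] at h1
  -- the difference of squares, with uniform L^{ph} bound
  have hhm : ∀ m, MemLp (fun x => (vm m x) ^ 2 - (v x) ^ 2) ph μ := fun m =>
    (hsqmem _ (hvm m)).sub (hsqmem _ hv)
  set D : ℝ≥0∞ := C ^ (2 : ℝ) + (eLpNorm v pN μ) ^ (2 : ℝ) with hD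
  have hDlt : D < ∞ := by
    rw [hD]
    exact ENNReal.add_lt_top.2 ⟨ENNReal.rpow_lt_top_of_nonneg (by norm_num) hC.ne,
      ENNReal.rpow_lt_top_of_nonneg (by norm_num) hv.2.ne⟩
  have hDb : ∀ m, eLpNorm (fun x => (vm m x) ^ 2 - (v x) ^ 2) ph μ ≤ D := by
    intro m
    calc eLpNorm (fun x => (vm m x) ^ 2 - (v x) ^ 2) ph μ
        ≤ eLpNorm (fun x => (vm m x) ^ 2) ph μ + eLpNorm (fun x => (v x) ^ 2) ph μ :=
          eLpNorm_sub_le (hsqmem _ (hvm m)).1 (hsqmem _ hv).1 hh1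
      _ ≤ D := by
          rw [hsqnorm, hsqnorm, hD]
          exact add_le_add (ENNReal.rpow_le_rpow (hCb m) (by norm_num)) le_rfl
  -- the product F m
  set F : ℕ → X → ℝ := fun m x => u x ^ (N - 2) * ((vm m x) ^ 2 - (v x) ^ 2) with hF
  have hFmem : ∀ m, MemLp (F m) 1 μ := by
    intro m
    have := (hhm m).smul hgmem (r := 1) (hpqr := ⟨by simpa [one_div] using E1.symm⟩)
    simpa [hF, smul_eq_mul, Pi.mul_def] using this
  have hFmeas : ∀ m, AEStronglyMeasurable (F m) μ := fun m => (hFmem m).1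
  -- uniform integrability
  have hui : UnifIntegrable F 1 μ := by
    intro ε hε
    have hDt1 : (0 : ℝ) < D.toReal + 1 := by positivity
    have hε2 : 0 < ε / (D.toReal + 1) := div_pos hε hDt1
    obtain ⟨δ, hδ, hδ'⟩ := hgmem.eLpNorm_indicator_le hq1 ENNReal.ofReal_ne_top hε2
    refine ⟨δ, hδ, fun m s hs hμs => ?_⟩
    have hind : s.indicator (F m) =
        (s.indicator fun x => u x ^ (N - 2)) • fun x => (vm m x) ^ 2 - (v x) ^ 2 := by
      funext x
      by_cases hx : x ∈ s <;>
        simp [hF, Set.indicator_of_mem, Set.indicator_of_notMem, hx, smul_eq_mul]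
    calc eLpNorm (s.indicator (F m)) 1 μ
        = eLpNorm ((s.indicator fun x => u x ^ (N - 2)) •
            fun x => (vm m x) ^ 2 - (v x) ^ 2) 1 μ := by rw [hind]
      _ ≤ eLpNorm (s.indicator fun x => u x ^ (N - 2)) pq μ *
            eLpNorm (fun x => (vm m x) ^ 2 - (v x) ^ 2) ph μ :=
          eLpNorm_smul_le_mul_eLpNorm (hhm m).1 (hgmem.1.indicator hs) (hpqr := ⟨by simpa [one_div] using E1.symm⟩)
      _ ≤ ENNReal.ofReal (ε / (D.toReal + 1)) * D :=
          mul_le_mul' (hδ' s hs hμs) (hDb m)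
      _ ≤ ENNReal.ofReal (ε / (D.toReal + 1)) * ENNReal.ofReal (D.toReal + 1) := by
          refine mul_le_mul_right ?_ _
          calc D = ENNReal.ofReal D.toReal := (ENNReal.ofReal_toReal hDlt.ne).symm
            _ ≤ ENNReal.ofReal (D.toReal + 1) :=
                ENNReal.ofReal_le_ofReal (by linarith)
      _ = ENNReal.ofReal ε := by
          rw [← ENNReal.ofReal_mul hε2.le, div_mul_cancel₀ _ hDt1.ne']
  -- convergence in measure of F to 0
  have haes : ∀ ns : ℕ → ℕ, Tendsto ns atTop atTop → ∃ ms : ℕ → ℕ, StrictMono ms ∧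
      ∀ᵐ x ∂μ, Tendsto (fun k => vm (ns (ms k)) x) atTop (𝓝 (v x)) := by
    intro ns hns
    have h1 : TendstoInMeasure μ (fun k => vm (ns k)) atTop v := by
      refine tendstoInMeasure_of_tendsto_eLpNorm (p := 2) two_ne_zero
        (fun k => (hvm (ns k)).1) hv.1 ?_
      exact hL2.comp hns
    exact h1.exists_seq_tendsto_ae
  have hFinm : TendstoInMeasure μ F atTop (0 : X → ℝ) := by
    intro ε hε
    refine tendsto_of_subseq_tendsto fun ns hns => ?_
    obtain ⟨ms, _, hae⟩ := haes ns hns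
    have haeF : ∀ᵐ x ∂μ, Tendsto (fun k => F (ns (ms k)) x) atTop (𝓝 ((0 : X → ℝ) x)) := by
      filter_upwards [hae] with x hx
      have h1 : Tendsto (fun k => u x ^ (N - 2) * ((vm (ns (ms k)) x) ^ 2 - (v x) ^ 2))
          atTop (𝓝 (u x ^ (N - 2) * ((v x) ^ 2 - (v x) ^ 2))) :=
        (((hx.pow 2).sub tendsto_const_nhds).const_mul _)
      simpa [hF] using h1
    have h2 := tendstoInMeasure_of_tendsto_ae (fun k => hFmeas (ns (ms k))) haeF
    exact ⟨ms, h2 ε hε⟩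
  -- Vitali
  have hmain : Tendsto (fun m => eLpNorm (F m - 0) 1 μ) atTop (𝓝 0) :=
    tendsto_Lp_finite_of_tendstoInMeasure le_rfl ENNReal.one_ne_top hFmeas
      (MemLp.zero) hui hFinm
  simp only [sub_zero] at hmain
  -- identify the integral with the L¹ norm
  have hrepr : ∀ m, ∫ x, u x ^ (N - 2) * |(vm m x) ^ 2 - (v x) ^ 2| ∂μ
      = (eLpNorm (F m) 1 μ).toReal := by
    intro m
    rw [eLpNorm_one_eq_lintegral_enorm, ← integral_norm_eq_lintegral_enorm (hFmeas m)]
    refine integral_congr_ae (Eventually.of_forall fun x => ?_)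
    show u x ^ (N - 2) * |(vm m x) ^ 2 - (v x) ^ 2|
      = ‖u x ^ (N - 2) * ((vm m x) ^ 2 - (v x) ^ 2)‖
    rw [Real.norm_eq_abs, abs_mul, abs_of_nonneg (Real.rpow_nonneg (hu0 x) _)]
  have hfun : (fun m => ∫ x, u x ^ (N - 2) * |(vm m x) ^ 2 - (v x) ^ 2| ∂μ)
      = fun m => (eLpNorm (F m) 1 μ).toReal := funext hrepr
  rw [hfun]
  have h0 : Tendsto ENNReal.toReal (𝓝 (0 : ℝ≥0∞)) (𝓝 (0 : ℝ)) := by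
    simpa using ENNReal.tendsto_toReal (a := 0) (by simp)
  exact h0.comp hmain

/-- On a finite measure space, if `u ≥ 0` is in `L^N` with `N = 2n/(n−4)`,
`(v_m)` is a sequence in `L^N` bounded in `L^N` norm which converges strongly in `L²`
to `v ∈ L^N`, then `∫ u^{N−2} |v_m² − v²| dμ → 0`. -/
theorem int_weight_sq_diff_tendsto_zero
    {X : Type*} [MeasurableSpace X] (μ : Measure X) [IsFiniteMeasure μ]
    (n : ℕ) (hn : 5 ≤ n) (N : ℝ) (hN : N = 2 * n / (n - 4))
    (u : X → ℝ) (hu0 : ∀ x, 0 ≤ u x) (huN : MemLp u (ENNReal.ofReal N) μ)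
    (v : X → ℝ) (hv : MemLp v (ENNReal.ofReal N) μ)
    (vm : ℕ → X → ℝ) (hvm : ∀ m, MemLp (vm m) (ENNReal.ofReal N) μ)
    (hbound : ∃ C : ℝ≥0∞, C < ⊤ ∧ ∀ m, eLpNorm (vm m) (ENNReal.ofReal N) μ ≤ C)
    (hL2 : Tendsto (fun m => eLpNorm (fun x => vm m x - v x) 2 μ) atTop (𝓝 0)) :
    Tendsto (fun m => ∫ x, u x ^ (N - 2) * |(vm m x) ^ 2 - (v x) ^ 2| ∂μ)
      atTop (𝓝 0) := by
  have h4 : (4 : ℝ) < (n : ℝ) := by exact_mod_cast (by omega : 4 < n)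
  have hN2 : 2 < N := by
    rw [hN, lt_div_iff₀ (by linarith)]
    linarith
  exact aux_int_weight μ N hN2 u hu0 huN v hv vm hvm hbound hL2
end

section
/- Let (X, μ) be a finite measure space, n ≥ 5 an integer and N = 2n/(n−4). Let u : X → ℝ be a nonnegative function with u ∈ L^N(μ), and let (w_m) be a sequence in L^N(μ) with sup_m ‖w_m‖_{L^N} < ∞ which converges strongly in L²(μ) to w ∈ L^N(μ). Then the functions u^{N−2}·(w_m² − (w_m − w)²) converge in L¹(μ) to u^{N−2}·w²; in particular ∫_X u^{N−2}(w_m² − (w_m − w)²) dμ → ∫_X u^{N−2} w² dμ. -/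
open MeasureTheory Filter Topology
open scoped ENNReal

theorem key_tendsto {X : Type*} [MeasurableSpace X] (μ : Measure X) [IsFiniteMeasure μ]
    {q p : ℝ≥0∞} (hq0 : q ≠ 0) (hqt : q ≠ ∞) (hqp : 1 / q + 1 / p = 1)
    (F : X → ℝ) (hF : MemLp F q μ)
    (h : ℕ → X → ℝ) (hh : ∀ m, AEStronglyMeasurable (h m) μ)
    (D : ℝ≥0∞) (hD : D ≠ ∞) (hhp : ∀ m, eLpNorm (h m) p μ ≤ D)
    (hh2 : Tendsto (fun m => eLpNorm (h m) 2 μ) atTop (𝓝 0)) :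
    Tendsto (fun m => ∫⁻ x, (‖F x‖₊ : ℝ≥0∞) * ‖h m x‖₊ ∂μ) atTop (𝓝 0) := by
  have hr : 0 < q.toReal := ENNReal.toReal_pos hq0 hqt
  set r := q.toReal with hrdef
  -- truncations
  set F₂ : ℕ → X → ℝ := fun M x => F x - max (min (F x) M) (-(M : ℝ)) with hF₂
  have hclamp : ∀ M : ℕ, Continuous fun y : ℝ => y - max (min y M) (-(M:ℝ)) := by
    intro M
    exact continuous_id.sub ((continuous_id.min continuous_const).max continuous_const)
  have hF₂m : ∀ M, AEStronglyMeasurable (F₂ M) μ := fun M =>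
    (hclamp M).comp_aestronglyMeasurable hF.1
  have hF₂le : ∀ M x, |F₂ M x| ≤ |F x| := by
    intro M x
    have hM0 : (0:ℝ) ≤ (M:ℝ) := Nat.cast_nonneg M
    rcases le_total (F x) 0 with h0 | h0
    · have h1 : min (F x) (M:ℝ) = F x := min_eq_left (h0.trans hM0)
      rw [hF₂]
      simp only [h1]
      rcases le_total (F x) (-(M:ℝ)) with h2 | h2
      · rw [max_eq_right h2, abs_of_nonpos (by linarith), abs_of_nonpos h0]; linarith
      · rw [max_eq_left h2, sub_self, abs_zero]; exact abs_nonneg _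
    · have h2 : max (min (F x) (M:ℝ)) (-(M:ℝ)) = min (F x) (M:ℝ) :=
        max_eq_left (le_trans (neg_nonpos.mpr hM0) (le_min h0 hM0))
      rw [hF₂]
      simp only [h2]
      rcases le_total (F x) (M:ℝ) with h3 | h3
      · rw [min_eq_left h3, sub_self, abs_zero]; exact abs_nonneg _
      · rw [min_eq_right h3, abs_of_nonneg (by linarith), abs_of_nonneg h0]; linarith
  have hF₂nn : ∀ M x, (‖F₂ M x‖₊ : ℝ≥0∞) ≤ (‖F x‖₊ : ℝ≥0∞) := by
    intro M x
    rw [ENNReal.coe_le_coe]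
    exact NNReal.coe_le_coe.mp (by simpa [coe_nnnorm, Real.norm_eq_abs] using hF₂le M x)
  have hF₂zero : ∀ (x) (M : ℕ), |F x| ≤ M → F₂ M x = 0 := by
    intro x M hM
    rw [hF₂]
    simp only [min_eq_left (abs_le.mp hM).2, max_eq_left (abs_le.mp hM).1, sub_self]
  -- the truncated part is bounded by M pointwise
  have hF₁bd : ∀ (M : ℕ) (x), (‖F x - F₂ M x‖₊ : ℝ≥0∞) ≤ (M : ℝ≥0∞) := by
    intro M x
    have h1 : F x - F₂ M x = max (min (F x) M) (-(M:ℝ)) := by rw [hF₂]; ring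
    have h2 : |max (min (F x) (M:ℝ)) (-(M:ℝ))| ≤ (M:ℝ) := by
      rw [abs_le]
      constructor
      · exact le_max_right _ _
      · exact max_le (min_le_right _ _) (by simp [Nat.cast_nonneg M])
    have h3 : ‖F x - F₂ M x‖ ≤ (M:ℝ) := by rw [h1, Real.norm_eq_abs]; exact h2
    calc (‖F x - F₂ M x‖₊ : ℝ≥0∞) = ENNReal.ofReal ‖F x - F₂ M x‖ :=
          (ofReal_norm _).symm
      _ ≤ ENNReal.ofReal (M:ℝ) := ENNReal.ofReal_le_ofReal h3
      _ = (M : ℝ≥0∞) := by simp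
  -- tail tendsto 0
  have hT : Tendsto (fun M : ℕ => eLpNorm (F₂ M) q μ) atTop (𝓝 0) := by
    have hlin : Tendsto (fun M : ℕ => ∫⁻ x, (‖F₂ M x‖₊ : ℝ≥0∞) ^ r ∂μ) atTop (𝓝 0) := by
      have h0 : (0 : ℝ≥0∞) = ∫⁻ _x, (0:ℝ≥0∞) ∂μ := by simp
      rw [h0]
      refine tendsto_lintegral_of_dominated_convergence' (fun x => (‖F x‖₊ : ℝ≥0∞) ^ r)
        (fun M => (hF₂m M).aemeasurable.enorm.pow_const r) ?_ ?_ ?_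
      · intro M
        exact Eventually.of_forall fun x => ENNReal.rpow_le_rpow (hF₂nn M x) hr.le
      · have h1 := hF.2
        rw [eLpNorm_eq_lintegral_rpow_enorm_toReal hq0 hqt] at h1
        exact ((ENNReal.rpow_lt_top_iff_of_pos (by positivity : (0:ℝ) < 1/r)).mp h1).ne
      · refine Eventually.of_forall fun x => ?_
        have hev : ∀ᶠ M : ℕ in atTop, (‖F₂ M x‖₊ : ℝ≥0∞) ^ r = 0 := by
          filter_upwards [eventually_ge_atTop (Nat.ceil |F x|)] with M hM
          have hz : F₂ M x = 0 := hF₂zero x M ((Nat.le_ceil _).trans (by exact_mod_cast hM))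
          simp [hz, ENNReal.zero_rpow_of_pos hr]
        exact Tendsto.congr' (hev.mono fun M hM => hM.symm) tendsto_const_nhds
    have hcont : Tendsto (fun a : ℝ≥0∞ => a ^ (1/r)) (𝓝 0) (𝓝 ((0:ℝ≥0∞) ^ (1/r))) :=
      (ENNReal.continuous_rpow_const).tendsto 0
    have := hcont.comp hlin
    rw [ENNReal.zero_rpow_of_pos (by positivity)] at this
    refine this.congr fun M => ?_
    rw [eLpNorm_eq_lintegral_rpow_enorm_toReal hq0 hqt]
    rfl
  -- main estimate
  rw [ENNReal.tendsto_nhds_zero]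
  intro ε hε
  have hε2 : (0:ℝ≥0∞) < ε / 2 := ENNReal.half_pos hε.ne' |>.trans_le le_rfl
  -- choose M
  have hTD : Tendsto (fun M : ℕ => eLpNorm (F₂ M) q μ * D) atTop (𝓝 0) := by
    simpa using ENNReal.Tendsto.mul_const hT (Or.inr hD)
  obtain ⟨M, hM⟩ := (hTD.eventually_le_const hε2).exists
  -- the first piece: M * ||h m||_1 → 0
  have hmes : μ Set.univ ≠ ∞ := measure_ne_top μ _
  have h1le : ∀ m, eLpNorm (h m) 1 μ ≤ eLpNorm (h m) 2 μ * μ Set.univ ^ ((1:ℝ)/1 - 1/2) := by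
    intro m
    simpa using eLpNorm_le_eLpNorm_mul_rpow_measure_univ (by norm_num : (1:ℝ≥0∞) ≤ 2) (hh m)
  have hfirst : Tendsto (fun m => (M : ℝ≥0∞) * eLpNorm (h m) 1 μ) atTop (𝓝 0) := by
    have hconst : ((M : ℝ≥0∞) * μ Set.univ ^ ((1:ℝ)/1 - 1/2)) ≠ ∞ := by
      refine ENNReal.mul_ne_top (by simp) ?_
      exact (ENNReal.rpow_lt_top_of_nonneg (by norm_num) hmes).ne
    have h2 : Tendsto (fun m => ((M : ℝ≥0∞) * μ Set.univ ^ ((1:ℝ)/1 - 1/2)) * eLpNorm (h m) 2 μ)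
        atTop (𝓝 0) := by
      simpa using ENNReal.Tendsto.const_mul hh2 (Or.inr hconst)
    refine tendsto_of_tendsto_of_tendsto_of_le_of_le tendsto_const_nhds h2 (fun m => zero_le)
      (fun m => ?_)
    calc (M : ℝ≥0∞) * eLpNorm (h m) 1 μ
        ≤ (M : ℝ≥0∞) * (eLpNorm (h m) 2 μ * μ Set.univ ^ ((1:ℝ)/1 - 1/2)) :=
          mul_le_mul_right (h1le m) _
      _ = ((M : ℝ≥0∞) * μ Set.univ ^ ((1:ℝ)/1 - 1/2)) * eLpNorm (h m) 2 μ := by ring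
  have hfirst' : ∀ᶠ m in atTop, (M : ℝ≥0∞) * eLpNorm (h m) 1 μ ≤ ε / 2 :=
    hfirst.eventually_le_const hε2
  filter_upwards [hfirst'] with m hm1
  -- split
  have hsplit : ∀ x, (‖F x‖₊ : ℝ≥0∞) * ‖h m x‖₊ ≤
      (M : ℝ≥0∞) * ‖h m x‖₊ + (‖F₂ M x‖₊ : ℝ≥0∞) * ‖h m x‖₊ := by
    intro x
    have : (‖F x‖₊ : ℝ≥0∞) ≤ (M : ℝ≥0∞) + ‖F₂ M x‖₊ := by
      calc (‖F x‖₊ : ℝ≥0∞) = ‖(F x - F₂ M x) + F₂ M x‖₊ := by ring_nf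
        _ ≤ (‖F x - F₂ M x‖₊ : ℝ≥0∞) + ‖F₂ M x‖₊ := by
            rw [← ENNReal.coe_add, ENNReal.coe_le_coe]; exact nnnorm_add_le _ _
        _ ≤ (M : ℝ≥0∞) + ‖F₂ M x‖₊ := add_le_add_left (hF₁bd M x) _
    calc (‖F x‖₊ : ℝ≥0∞) * ‖h m x‖₊ ≤ ((M : ℝ≥0∞) + ‖F₂ M x‖₊) * ‖h m x‖₊ :=
          mul_le_mul_left this _
      _ = (M : ℝ≥0∞) * ‖h m x‖₊ + (‖F₂ M x‖₊ : ℝ≥0∞) * ‖h m x‖₊ := by ring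
  calc ∫⁻ x, (‖F x‖₊ : ℝ≥0∞) * ‖h m x‖₊ ∂μ
      ≤ ∫⁻ x, ((M : ℝ≥0∞) * ‖h m x‖₊ + (‖F₂ M x‖₊ : ℝ≥0∞) * ‖h m x‖₊) ∂μ :=
        lintegral_mono hsplit
    _ = (M : ℝ≥0∞) * ∫⁻ x, (‖h m x‖₊ : ℝ≥0∞) ∂μ + ∫⁻ x, (‖F₂ M x‖₊ : ℝ≥0∞) * ‖h m x‖₊ ∂μ := by
        rw [lintegral_add_left' (f := fun x => (M : ℝ≥0∞) * (‖h m x‖₊ : ℝ≥0∞)) (((hh m).aemeasurable.enorm).const_mul _), lintegral_const_mul' _ _ (by simp)]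
    _ ≤ ε / 2 + ε / 2 := by
        refine add_le_add ?_ ?_
        · rw [eLpNorm_one_eq_lintegral_enorm] at hm1; exact hm1
        · -- Hölder
          have hhol : ∫⁻ x, (‖F₂ M x‖₊ : ℝ≥0∞) * ‖h m x‖₊ ∂μ
              ≤ eLpNorm (F₂ M) q μ * eLpNorm (h m) p μ := by
            have := eLpNorm_smul_le_mul_eLpNorm (𝕜 := ℝ) (hh m) (hF₂m M) (p := q) (q := p) (r := 1)
              (hpqr := ⟨by rw [inv_one, ← one_div q, ← one_div p, hqp]⟩)
            rw [eLpNorm_one_eq_lintegral_enorm] at this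
            refine le_trans (le_of_eq ?_) this
            refine lintegral_congr fun x => ?_
            simp [Pi.smul_apply', smul_eq_mul, nnnorm_mul, ENNReal.coe_mul, enorm_eq_nnnorm]
          refine hhol.trans ?_
          exact le_trans (mul_le_mul_right (hhp m) _) hM
    _ = ε := ENNReal.add_halves ε

/-- Brezis–Lieb type convergence. On a finite measure space, if `u ≥ 0`
is in `L^N` with `N = 2n/(n−4)`, and `(w_m)` is a sequence in `L^N` bounded in `L^N`
norm converging strongly in `L²` to `w ∈ L^N`, then
`u^{N−2}·(w_m² − (w_m − w)²) → u^{N−2}·w²` in `L¹(μ)`; in particular the integrals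
converge. -/
theorem brezis_lieb_type_convergence
    {X : Type*} [MeasurableSpace X] (μ : Measure X) [IsFiniteMeasure μ]
    (n : ℕ) (hn : 5 ≤ n) (N : ℝ) (hN : N = 2 * n / (n - 4))
    (u : X → ℝ) (hu0 : ∀ x, 0 ≤ u x) (huN : MemLp u (ENNReal.ofReal N) μ)
    (w : X → ℝ) (hw : MemLp w (ENNReal.ofReal N) μ)
    (wm : ℕ → X → ℝ) (hwm : ∀ m, MemLp (wm m) (ENNReal.ofReal N) μ)
    (hbound : ∃ C : ℝ≥0∞, C < ⊤ ∧ ∀ m, eLpNorm (wm m) (ENNReal.ofReal N) μ ≤ C)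
    (hL2 : Tendsto (fun m => eLpNorm (fun x => wm m x - w x) 2 μ) atTop (𝓝 0)) :
    Tendsto (fun m => ∫ x,
        |u x ^ (N - 2) * ((wm m x) ^ 2 - (wm m x - w x) ^ 2)
          - u x ^ (N - 2) * (w x) ^ 2| ∂μ) atTop (𝓝 0) ∧
    Tendsto (fun m => ∫ x, u x ^ (N - 2) * ((wm m x) ^ 2 - (wm m x - w x) ^ 2) ∂μ)
      atTop (𝓝 (∫ x, u x ^ (N - 2) * (w x) ^ 2 ∂μ)) := by
  obtain ⟨C, hC, hCb⟩ := hbound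
  -- basic real facts about N
  have hn5 : (5:ℝ) ≤ (n:ℝ) := by exact_mod_cast hn
  have hn4 : (0:ℝ) < (n:ℝ) - 4 := by linarith
  have hN2 : 2 < N := by
    rw [hN, lt_div_iff₀ hn4]; linarith
  have hN0 : 0 < N := by linarith
  -- ENNReal exponents
  set a : ℝ≥0∞ := ENNReal.ofReal N with ha
  have ha0 : a ≠ 0 := by simp [ha, ENNReal.ofReal_eq_zero, not_le, hN0]
  have hat : a ≠ ∞ := ENNReal.ofReal_ne_top
  have haN2 : ENNReal.ofReal (N - 2) ≠ 0 := by
    simp [ENNReal.ofReal_eq_zero, not_le]; linarith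
  have haN1 : ENNReal.ofReal (N - 1) ≠ 0 := by
    simp [ENNReal.ofReal_eq_zero, not_le]; linarith
  set q2 : ℝ≥0∞ := a / ENNReal.ofReal (N - 2) with hq2
  set q1 : ℝ≥0∞ := a / ENNReal.ofReal (N - 1) with hq1
  have hq1inv : 1 / q1 = ENNReal.ofReal (N - 1) / a := by
    rw [hq1, one_div, ENNReal.inv_div (Or.inr hat) (Or.inr ha0)]
  have hq2inv : 1 / q2 = ENNReal.ofReal (N - 2) / a := by
    rw [hq2, one_div, ENNReal.inv_div (Or.inr hat) (Or.inr ha0)]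
  have hainv : 1 / a = ENNReal.ofReal 1 / a := by norm_num
  -- membership of uu
  set uu : X → ℝ := fun x => u x ^ (N - 2) with huu_def
  have huu : MemLp uu q2 μ := by
    have h1 := huN.norm_rpow_div (ENNReal.ofReal (N - 2))
    have h2 : (ENNReal.ofReal (N - 2)).toReal = N - 2 := ENNReal.toReal_ofReal (by linarith)
    rw [h2] at h1
    have h3 : (fun x => ‖u x‖ ^ (N - 2)) = uu := by
      funext x; rw [Real.norm_eq_abs, abs_of_nonneg (hu0 x)]
    rwa [h3] at h1
  -- F and its membership in L^{q1}
  set F : X → ℝ := fun x => u x ^ (N - 2) * w x with hF_def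
  have hF : MemLp F q1 μ := by
    have hpqr : 1 / q1 = 1 / q2 + 1 / a := by
      rw [hq1inv, hq2inv, hainv, ENNReal.div_add_div_same, ← ENNReal.ofReal_add (by linarith)
        (by norm_num)]
      norm_num
      ring_nf
    exact hw.smul huu (hpqr := ⟨by simpa only [one_div] using hpqr.symm⟩)
  -- h m and bounds
  set h : ℕ → X → ℝ := fun m x => wm m x - w x with hh_def
  have hhm : ∀ m, MemLp (h m) a μ := fun m => (hwm m).sub hw
  have h1a : (1:ℝ≥0∞) ≤ a := ENNReal.one_le_ofReal.mpr (by linarith)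
  set D : ℝ≥0∞ := C + eLpNorm w a μ with hD_def
  have hD : D ≠ ∞ := by
    rw [hD_def]
    exact ENNReal.add_ne_top.mpr ⟨hC.ne, hw.eLpNorm_lt_top.ne⟩
  have hhp : ∀ m, eLpNorm (h m) a μ ≤ D := by
    intro m
    refine (eLpNorm_sub_le (hwm m).1 hw.1 h1a).trans ?_
    exact add_le_add_left (hCb m) _
  -- apply the key lemma
  have hqp : 1 / q1 + 1 / a = 1 := by
    rw [hq1inv, hainv, ENNReal.div_add_div_same, ← ENNReal.ofReal_add (by linarith) (by norm_num)]
    have : N - 1 + 1 = N := by ring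
    rw [this]
    exact ENNReal.div_self ha0 hat
  have hq10 : q1 ≠ 0 := by
    rw [hq1]
    simp [ENNReal.div_eq_zero_iff, ha0, ENNReal.ofReal_ne_top]
  have hq1t : q1 ≠ ∞ := by
    rw [hq1]
    simp [ENNReal.div_eq_top, ha0, hat, haN1]
  have hkey : Tendsto (fun m => ∫⁻ x, (‖F x‖₊ : ℝ≥0∞) * ‖h m x‖₊ ∂μ) atTop (𝓝 0) :=
    key_tendsto μ hq10 hq1t hqp F hF h (fun m => (hhm m).1) D hD hhp hL2
  -- pointwise identity
  have hexp_eq : ∀ (m : ℕ) (x : X), u x ^ (N - 2) * ((wm m x) ^ 2 - (wm m x - w x) ^ 2)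
      - u x ^ (N - 2) * (w x) ^ 2 = 2 * F x * h m x := by
    intro m x
    simp only [hF_def, hh_def]
    ring
  have habs : ∀ m, AEStronglyMeasurable (fun x => 2 * F x * h m x) μ := fun m =>
    (aestronglyMeasurable_const.mul hF.1).mul (hhm m).1
  have hlint : ∀ m, ∫ x, |2 * F x * h m x| ∂μ
      = ((2:ℝ≥0∞) * ∫⁻ x, (‖F x‖₊ : ℝ≥0∞) * ‖h m x‖₊ ∂μ).toReal := by
    intro m
    have hmeas : AEStronglyMeasurable (fun x => |2 * F x * h m x|) μ := by
      have := (habs m).norm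
      simp only [Real.norm_eq_abs] at this
      exact this
    rw [integral_eq_lintegral_of_nonneg_ae (Eventually.of_forall fun x => abs_nonneg _) hmeas]
    congr 1
    rw [← lintegral_const_mul' _ _ (by simp : (2:ℝ≥0∞) ≠ ∞)]
    refine lintegral_congr fun x => ?_
    rw [← Real.norm_eq_abs, ofReal_norm, enorm_eq_nnnorm]
    simp only [nnnorm_mul, ENNReal.coe_mul, ← mul_assoc]
    congr 1
    congr 1
    simp
  -- part 1
  have part1 : Tendsto (fun m => ∫ x,
      |u x ^ (N - 2) * ((wm m x) ^ 2 - (wm m x - w x) ^ 2)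
        - u x ^ (N - 2) * (w x) ^ 2| ∂μ) atTop (𝓝 0) := by
    have h2A : Tendsto (fun m => (2:ℝ≥0∞) * ∫⁻ x, (‖F x‖₊ : ℝ≥0∞) * ‖h m x‖₊ ∂μ)
        atTop (𝓝 0) := by
      simpa using ENNReal.Tendsto.const_mul hkey (Or.inr (by simp))
    have h3 : Tendsto (fun m => ((2:ℝ≥0∞) * ∫⁻ x, (‖F x‖₊ : ℝ≥0∞) * ‖h m x‖₊ ∂μ).toReal)
        atTop (𝓝 0) := by
      have h4 := (ENNReal.tendsto_toReal (by simp : (0:ℝ≥0∞) ≠ ∞)).comp h2A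
      rw [ENNReal.toReal_zero] at h4
      exact h4
    refine h3.congr fun m => ?_
    rw [← hlint m]
    refine integral_congr_ae (Eventually.of_forall fun x => ?_)
    show |2 * F x * h m x| = |u x ^ (N - 2) * ((wm m x) ^ 2 - (wm m x - w x) ^ 2)
      - u x ^ (N - 2) * (w x) ^ 2|
    rw [hexp_eq m x]
  refine ⟨part1, ?_⟩
  -- integrability
  have hpqr2 : (1:ℝ≥0∞) / (a / 2) = 1 / a + 1 / a := by
    rw [one_div, ENNReal.inv_div (Or.inl (by simp)) (Or.inl (by simp))]
    rw [ENNReal.div_add_div_same]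
    norm_num
  have hpqr1 : (1:ℝ≥0∞) = 1 / q2 + 1 / (a / 2) := by
    rw [hpqr2, hq2inv, hainv, ENNReal.div_add_div_same, ENNReal.div_add_div_same,
      ← ENNReal.ofReal_add (by norm_num) (by norm_num), ← ENNReal.ofReal_add (by linarith)
      (by norm_num)]
    have hNN : N - 2 + (1 + 1) = N := by ring
    rw [hNN]
    exact (ENNReal.div_self ha0 hat).symm
  have hpqr1' : (1:ℝ≥0∞) / 1 = 1 / q2 + 1 / (a / 2) := by simpa using hpqr1
  have hww : MemLp (w • w) (a / 2) μ := hw.smul hw (hpqr := ⟨by simpa only [one_div] using hpqr2.symm⟩)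
  have hint1 : Integrable (fun x => uu x * (w x * w x)) μ :=
    memLp_one_iff_integrable.mp (hww.smul huu (hpqr := ⟨by simpa only [one_div] using hpqr1'.symm⟩))
  have hwh : ∀ m, MemLp ((h m) • w) (a / 2) μ := fun m => hw.smul (hhm m) (hpqr := ⟨by simpa only [one_div] using hpqr2.symm⟩)
  have hint2 : ∀ m, Integrable (fun x => uu x * (h m x * w x)) μ := fun m =>
    memLp_one_iff_integrable.mp ((hwh m).smul huu (hpqr := ⟨by simpa only [one_div] using hpqr1'.symm⟩))
  have fInt : Integrable (fun x => u x ^ (N - 2) * (w x) ^ 2) μ := by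
    refine hint1.congr (Eventually.of_forall fun x => ?_)
    simp only [huu_def]
    ring
  have fmInt : ∀ m, Integrable (fun x => u x ^ (N - 2)
      * ((wm m x) ^ 2 - (wm m x - w x) ^ 2)) μ := by
    intro m
    refine (hint1.add ((hint2 m).const_mul 2)).congr (Eventually.of_forall fun x => ?_)
    simp only [Pi.add_apply, huu_def, hh_def]
    ring
  -- part 2
  rw [tendsto_iff_dist_tendsto_zero]
  refine squeeze_zero (fun m => dist_nonneg) (fun m => ?_) part1
  rw [Real.dist_eq, ← integral_sub (fmInt m) fInt]
  calc |∫ x, (u x ^ (N - 2) * ((wm m x) ^ 2 - (wm m x - w x) ^ 2)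
        - u x ^ (N - 2) * (w x) ^ 2) ∂μ|
      ≤ ∫ x, ‖u x ^ (N - 2) * ((wm m x) ^ 2 - (wm m x - w x) ^ 2)
        - u x ^ (N - 2) * (w x) ^ 2‖ ∂μ := by
        rw [← Real.norm_eq_abs]
        exact norm_integral_le_integral_norm _
    _ = ∫ x, |u x ^ (N - 2) * ((wm m x) ^ 2 - (wm m x - w x) ^ 2)
        - u x ^ (N - 2) * (w x) ^ 2| ∂μ := by
        simp only [Real.norm_eq_abs]
end

section
/- Let (X, μ) be a measure space, n ≥ 5 an integer and N = 2n/(n−4). Let u : X → ℝ be a nonnegative measurable function with ∫_X u^N dμ = 1. Suppose v₁, v₂ ∈ L^N(μ) satisfy v₁·v₂ = 0 μ-almost everywhere, and ∫_X u^{N−2} v_i² dμ = 1 for i = 1, 2. Then max( ‖v₁‖_{L^N}², ‖v₂‖_{L^N}² ) ≥ 2^{4/n}. -/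
open MeasureTheory
open scoped ENNReal

/-- A function is in `ℒp` (for real `0 < p`) when `|f|^p` is integrable. -/
lemma memLp_of_integrable_abs_rpow {X : Type*} [MeasurableSpace X] {μ : Measure X}
    {f : X → ℝ} (hf : AEStronglyMeasurable f μ) {p : ℝ} (hp : 0 < p)
    (h : Integrable (fun x => |f x| ^ p) μ) : MemLp f (ENNReal.ofReal p) μ := by
  have hq0 : ENNReal.ofReal p ≠ 0 := by
    simpa [ENNReal.ofReal_eq_zero, not_le] using hp
  have hqt : ENNReal.ofReal p ≠ ∞ := ENNReal.ofReal_ne_top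
  have h1 : MemLp (fun x => ‖f x‖ ^ (ENNReal.ofReal p).toReal) 1 μ := by
    rw [memLp_one_iff_integrable]
    simpa [Real.norm_eq_abs, ENNReal.toReal_ofReal hp.le] using h
  have h2 := (memLp_norm_rpow_iff (p := ENNReal.ofReal p) hf hq0 hqt).mp
  rw [ENNReal.div_self hq0 hqt] at h2
  exact h2 h1

/-- Key step: Hölder inequality on the support. -/
lemma key_holder {X : Type*} [MeasurableSpace X] (μ : Measure X)
    (N : ℝ) (hN2 : 2 < N)
    (u : X → ℝ) (hu0 : ∀ x, 0 ≤ u x) (humeas : Measurable u)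
    (huint : Integrable (fun x => u x ^ N) μ)
    (v : X → ℝ) (hv : MemLp v (ENNReal.ofReal N) μ)
    (S : Set X) (hS : MeasurableSet S)
    (hvS : ∀ᵐ x ∂μ, x ∉ S → v x = 0)
    (hnorm : ∫ x, u x ^ (N - 2) * v x ^ 2 ∂μ = 1) :
    1 ≤ (∫ x, S.indicator (fun y => u y ^ N) x ∂μ) ^ ((N - 2) / N)
        * (∫ x, |v x| ^ N ∂μ) ^ (2 / N) := by
  have hN0 : 0 < N := lt_trans two_pos hN2
  have hNm2 : 0 < N - 2 := by linarith
  set p : ℝ := N / (N - 2) with hp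
  set q : ℝ := N / 2 with hq
  have hpq : p.HolderConjugate q := by
    rw [Real.holderConjugate_iff_eq_conjExponent (by rw [hp, lt_div_iff₀ hNm2]; linarith)]
    · have hN2' : N - 2 ≠ 0 := hNm2.ne'
      rw [hp, hq]; field_simp; ring
  have hp0 : 0 < p := hpq.pos
  have hq0 : 0 < q := hpq.symm.pos
  set f : X → ℝ := fun x => S.indicator (fun y => u y ^ (N - 2)) x with hf
  have hf_nonneg : ∀ x, 0 ≤ f x := fun x =>
    Set.indicator_nonneg (fun y _ => Real.rpow_nonneg (hu0 y) _) x
  have hfp : ∀ x, f x ^ p = S.indicator (fun y => u y ^ N) x := by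
    intro x
    by_cases hx : x ∈ S
    · simp only [hf, Set.indicator_of_mem hx]
      rw [← Real.rpow_mul (hu0 x)]
      congr 1
      rw [hp]; field_simp
    · simp only [hf, Set.indicator_of_notMem hx]
      exact Real.zero_rpow (ne_of_gt hp0)
  have hgq : ∀ x, (v x ^ 2) ^ q = |v x| ^ N := by
    intro x
    rw [← sq_abs, ← Real.rpow_natCast |v x| 2, ← Real.rpow_mul (abs_nonneg _)]
    congr 1
    rw [hq]; push_cast; ring
  have hfmeas : Measurable f :=
    ((Real.continuous_rpow_const hNm2.le).measurable.comp humeas).indicator hS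
  have hfmem : MemLp f (ENNReal.ofReal p) μ := by
    apply memLp_of_integrable_abs_rpow hfmeas.aestronglyMeasurable hp0
    apply huint.mono'
      ((Real.continuous_rpow_const hp0.le).measurable.comp hfmeas.abs).aestronglyMeasurable
    filter_upwards with x
    rw [Function.comp_apply] at *
    rw [Real.norm_eq_abs, abs_of_nonneg (Real.rpow_nonneg (abs_nonneg _) _),
      abs_of_nonneg (hf_nonneg x), hfp x]
    by_cases hx : x ∈ S
    · rw [Set.indicator_of_mem hx]
    · rw [Set.indicator_of_notMem hx]
      exact Real.rpow_nonneg (hu0 x) _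
  have hvN : Integrable (fun x => |v x| ^ N) μ := by
    have := hv.integrable_norm_rpow (by simpa [ENNReal.ofReal_eq_zero, not_le] using hN0)
      ENNReal.ofReal_ne_top
    simpa [Real.norm_eq_abs, ENNReal.toReal_ofReal hN0.le] using this
  have hgmem : MemLp (fun x => v x ^ 2) (ENNReal.ofReal q) μ := by
    apply memLp_of_integrable_abs_rpow ((hv.aestronglyMeasurable.mul
      hv.aestronglyMeasurable).congr (by filter_upwards with x; rw [Pi.mul_apply, sq])) hq0
    have : (fun x => |v x ^ 2| ^ q) = fun x => |v x| ^ N := by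
      funext x
      rw [abs_of_nonneg (sq_nonneg _), hgq x]
    rw [this]; exact hvN
  have h1 : ∫ x, f x * v x ^ 2 ∂μ = 1 := by
    rw [← hnorm]
    apply integral_congr_ae
    filter_upwards [hvS] with x hx
    by_cases hxS : x ∈ S
    · simp [hf, Set.indicator_of_mem hxS]
    · simp [hf, Set.indicator_of_notMem hxS, hx hxS]
  have holder := integral_mul_le_Lp_mul_Lq_of_nonneg hpq
    (Filter.Eventually.of_forall hf_nonneg)
    (Filter.Eventually.of_forall fun x => sq_nonneg (v x)) hfmem hgmem
  rw [h1] at holder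
  have e1 : ∫ x, f x ^ p ∂μ = ∫ x, S.indicator (fun y => u y ^ N) x ∂μ :=
    integral_congr_ae (Filter.Eventually.of_forall fun x => hfp x)
  have e2 : ∫ x, (v x ^ 2) ^ q ∂μ = ∫ x, |v x| ^ N ∂μ :=
    integral_congr_ae (Filter.Eventually.of_forall fun x => hgq x)
  rw [e1, e2] at holder
  have ep : 1 / p = (N - 2) / N := by rw [hp, one_div_div]
  have eq' : 1 / q = 2 / N := by rw [hq, one_div_div]
  rwa [ep, eq'] at holder

/-- With `N = 2n/(n−4)`, if `u ≥ 0` is measurable with `∫ u^N dμ = 1`,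
and `v₁, v₂ ∈ L^N(μ)` have `v₁·v₂ = 0` a.e. and `∫ u^{N−2} v_i² dμ = 1` for `i = 1,2`,
then `max(‖v₁‖_{L^N}², ‖v₂‖_{L^N}²) ≥ 2^{4/n}`. -/
theorem disjoint_supports_lower_bound
    {X : Type*} [MeasurableSpace X] (μ : Measure X)
    (n : ℕ) (hn : 5 ≤ n) (N : ℝ) (hN : N = 2 * n / (n - 4))
    (u : X → ℝ) (hu0 : ∀ x, 0 ≤ u x) (humeas : Measurable u)
    (huN : ∫ x, u x ^ N ∂μ = 1)
    (v₁ v₂ : X → ℝ) (hv₁ : MemLp v₁ (ENNReal.ofReal N) μ)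
    (hv₂ : MemLp v₂ (ENNReal.ofReal N) μ)
    (hdisj : ∀ᵐ x ∂μ, v₁ x * v₂ x = 0)
    (hn₁ : ∫ x, u x ^ (N - 2) * (v₁ x) ^ 2 ∂μ = 1)
    (hn₂ : ∫ x, u x ^ (N - 2) * (v₂ x) ^ 2 ∂μ = 1) :
    (2 : ℝ) ^ ((4 : ℝ) / n) ≤
      max ((eLpNorm v₁ (ENNReal.ofReal N) μ).toReal ^ 2)
          ((eLpNorm v₂ (ENNReal.ofReal N) μ).toReal ^ 2) := by
  have hn5 : (5 : ℝ) ≤ (n : ℝ) := by exact_mod_cast hn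
  have hn4 : (0 : ℝ) < (n : ℝ) - 4 := by linarith
  have hn0 : (0 : ℝ) < (n : ℝ) := by linarith
  have hN2 : 2 < N := by rw [hN, lt_div_iff₀ hn4]; linarith
  have hN0 : 0 < N := lt_trans two_pos hN2
  have huint : Integrable (fun x => u x ^ N) μ := by
    by_contra h
    rw [integral_undef h] at huN
    norm_num at huN
  -- measurable representatives and supports
  have hw₁ := hv₁.aestronglyMeasurable
  have hw₂ := hv₂.aestronglyMeasurable
  set w₁ : X → ℝ := hw₁.mk v₁ with hw₁def
  set w₂ : X → ℝ := hw₂.mk v₂ with hw₂def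
  have hvw₁ : v₁ =ᵐ[μ] w₁ := hw₁.ae_eq_mk
  have hvw₂ : v₂ =ᵐ[μ] w₂ := hw₂.ae_eq_mk
  set S₁ : Set X := {x | w₁ x ≠ 0} with hS₁def
  set S₂ : Set X := {x | w₂ x ≠ 0} with hS₂def
  have hS₁ : MeasurableSet S₁ :=
    (hw₁.stronglyMeasurable_mk.measurable (measurableSet_singleton 0)).compl
  have hS₂ : MeasurableSet S₂ :=
    (hw₂.stronglyMeasurable_mk.measurable (measurableSet_singleton 0)).compl
  have hvS₁ : ∀ᵐ x ∂μ, x ∉ S₁ → v₁ x = 0 := by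
    filter_upwards [hvw₁] with x hx hxS
    rw [hx]; exact not_not.mp hxS
  have hvS₂ : ∀ᵐ x ∂μ, x ∉ S₂ → v₂ x = 0 := by
    filter_upwards [hvw₂] with x hx hxS
    rw [hx]; exact not_not.mp hxS
  set a₁ : ℝ := ∫ x, S₁.indicator (fun y => u y ^ N) x ∂μ with ha₁def
  set a₂ : ℝ := ∫ x, S₂.indicator (fun y => u y ^ N) x ∂μ with ha₂def
  set B₁ : ℝ := ∫ x, |v₁ x| ^ N ∂μ with hB₁def
  set B₂ : ℝ := ∫ x, |v₂ x| ^ N ∂μ with hB₂def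
  have key₁ := key_holder μ N hN2 u hu0 humeas huint v₁ hv₁ S₁ hS₁ hvS₁ hn₁
  have key₂ := key_holder μ N hN2 u hu0 humeas huint v₂ hv₂ S₂ hS₂ hvS₂ hn₂
  have ha₁nonneg : 0 ≤ a₁ :=
    integral_nonneg fun x => Set.indicator_nonneg (fun y _ => Real.rpow_nonneg (hu0 y) _) x
  have ha₂nonneg : 0 ≤ a₂ :=
    integral_nonneg fun x => Set.indicator_nonneg (fun y _ => Real.rpow_nonneg (hu0 y) _) x
  have hB₁nonneg : 0 ≤ B₁ := integral_nonneg fun x => Real.rpow_nonneg (abs_nonneg _) _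
  have hB₂nonneg : 0 ≤ B₂ := integral_nonneg fun x => Real.rpow_nonneg (abs_nonneg _) _
  -- the masses add up to at most 1
  have hsum : a₁ + a₂ ≤ 1 := by
    have hi₁ : Integrable (fun x => S₁.indicator (fun y => u y ^ N) x) μ := by
      simpa using huint.indicator hS₁
    have hi₂ : Integrable (fun x => S₂.indicator (fun y => u y ^ N) x) μ := by
      simpa using huint.indicator hS₂
    rw [ha₁def, ha₂def, ← integral_add hi₁ hi₂]
    rw [← huN]
    apply integral_mono_ae (hi₁.add hi₂) huint
    filter_upwards [hdisj, hvw₁, hvw₂] with x h h1 h2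
    rw [h1, h2] at h
    by_cases hx1 : x ∈ S₁ <;> by_cases hx2 : x ∈ S₂
    · exact absurd (mul_eq_zero.mp h) (by push_neg; exact ⟨hx1, hx2⟩)
    · simp [Set.indicator_of_mem hx1, Set.indicator_of_notMem hx2]
    · simp [Set.indicator_of_notMem hx1, Set.indicator_of_mem hx2]
    · simp [Set.indicator_of_notMem hx1, Set.indicator_of_notMem hx2,
        Real.rpow_nonneg (hu0 x)]
  -- norms squared
  have hNtop : ENNReal.ofReal N ≠ ∞ := ENNReal.ofReal_ne_top
  have hNne : ENNReal.ofReal N ≠ 0 := by simpa [ENNReal.ofReal_eq_zero, not_le] using hN0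
  have norm_sq : ∀ (v : X → ℝ), MemLp v (ENNReal.ofReal N) μ →
      (eLpNorm v (ENNReal.ofReal N) μ).toReal ^ 2 = (∫ x, |v x| ^ N ∂μ) ^ ((2 : ℝ) / N) := by
    intro v hv
    rw [hv.eLpNorm_eq_integral_rpow_norm hNne hNtop, ENNReal.toReal_ofReal (by positivity)]
    have hint_nonneg : 0 ≤ ∫ x, ‖v x‖ ^ (ENNReal.ofReal N).toReal ∂μ :=
      integral_nonneg fun x => Real.rpow_nonneg (norm_nonneg _) _
    rw [← Real.rpow_natCast _ 2, ← Real.rpow_mul hint_nonneg]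
    simp only [ENNReal.toReal_ofReal hN0.le, Real.norm_eq_abs]
    congr 1
    push_cast; field_simp
  have hns₁ := norm_sq v₁ hv₁
  have hns₂ := norm_sq v₂ hv₂
  -- exponent identity
  have hexp : (N - 2) / N = (4 : ℝ) / n := by
    rw [hN]
    have h4 : (n : ℝ) - 4 ≠ 0 := ne_of_gt hn4
    have h0 : (n : ℝ) ≠ 0 := ne_of_gt hn0
    field_simp
    ring
  set r : ℝ := (4 : ℝ) / n with hrdef
  have hr0 : 0 < r := by positivity
  -- numeric core
  have core : ∀ a B : ℝ, 0 ≤ a → a ≤ 1 / 2 → 0 ≤ B →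
      1 ≤ a ^ r * B → (2 : ℝ) ^ r ≤ B := by
    intro a B ha hle hB h
    have h1 : a ^ r ≤ (1 / 2 : ℝ) ^ r := Real.rpow_le_rpow ha hle hr0.le
    have h2 : 1 ≤ (1 / 2 : ℝ) ^ r * B :=
      le_trans h (mul_le_mul_of_nonneg_right h1 hB)
    have h3 : (2 : ℝ) ^ r * ((1 / 2 : ℝ) ^ r * B) = B := by
      rw [← mul_assoc, ← Real.mul_rpow (by norm_num) (by norm_num)]
      norm_num
    calc (2 : ℝ) ^ r = (2 : ℝ) ^ r * 1 := by ring
      _ ≤ (2 : ℝ) ^ r * ((1 / 2 : ℝ) ^ r * B) :=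
          mul_le_mul_of_nonneg_left h2 (Real.rpow_nonneg (by norm_num) _)
      _ = B := h3
  rw [hexp] at key₁ key₂
  rcases le_or_gt a₁ (1 / 2) with hhalf | hhalf
  · refine le_trans ?_ (le_max_left _ _)
    rw [hns₁]
    exact core a₁ (B₁ ^ ((2 : ℝ) / N)) ha₁nonneg hhalf
      (Real.rpow_nonneg hB₁nonneg _) key₁
  · refine le_trans ?_ (le_max_right _ _)
    rw [hns₂]
    have hhalf₂ : a₂ ≤ 1 / 2 := by linarith
    exact core a₂ (B₂ ^ ((2 : ℝ) / N)) ha₂nonneg hhalf₂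
      (Real.rpow_nonneg hB₂nonneg _) key₂
end
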